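/- For a first-order Markov chain law p on S^T and every 1 ≤ k ≤ T and every path s^T (of positive probability), R̄_k(s^T) = (k-1)·R̄_∞(s^T) + R̄_1(s^T), where R̄_1(s^T) = -(1/T)∑_{t=1}^T log p_t(s_t) is the pointwise log-marginal risk and R̄_∞(s^T) = -(1/T) log p(s^T). -/

import Mathlib

/-- For a first-order Markov chain law on `S^T` and every `1 ≤ k ≤ T`
and every path of positive probability:
`R̄_k(s^T) = (k-1)·R̄_∞(s^T) + R̄_1(s^T)`, where `R̄_1(s^T) = -(1/T)∑_{t=1}^T log p_t(s_t)`
is the pointwise log-marginal (log-pseudolikelihood) risk and `R̄_∞(s^T) = -(1/T) log p(s^T)`. -/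
theorem stmt2 {S : Type*} (T k : ℕ) (hT : 1 ≤ T) (hk1 : 1 ≤ k) (hkT : k ≤ T)
    (s : ℕ → S)
    (pm : ℕ → S → ℝ) (q : ℕ → S → S → ℝ)
    -- `win m n` is the window probability `p(s_m^n)`, factored via the Markov property.
    (win : ℕ → ℕ → ℝ)
    (hwin : ∀ m n, win m n = pm m (s m) * ∏ t ∈ Finset.Ico m n, q t (s t) (s (t + 1)))
    -- the path has positive probability (all marginals and transitions along it are positive)
    (hpm : ∀ t, 1 ≤ t → t ≤ T → 0 < pm t (s t))
    (hq : ∀ t, 1 ≤ t → t < T → 0 < q t (s t) (s (t + 1)))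
    -- `U j = Ū_j(s^T)`, the product of length-`j` window probabilities of `s`
    (U : ℕ → ℝ)
    (hU : ∀ j, U j = ∏ i ∈ Finset.range (T + j - 1), win (max 1 (i + 2 - j)) (min T (i + 1)))
    (Rbar : ℕ → ℝ) (hRbar : ∀ j, Rbar j = -(1 / (T : ℝ)) * Real.log (U j))
    (Rinf : ℝ) (hRinf : Rinf = -(1 / (T : ℝ)) * Real.log (win 1 T))
    (R1 : ℝ) (hR1 : R1 = -(1 / (T : ℝ)) * ∑ t ∈ Finset.Icc 1 T, Real.log (pm t (s t))) :
    Rbar k = ((k : ℝ) - 1) * Rinf + R1 := by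
  have hqpos : 0 < ∏ t ∈ Finset.Ico 1 T, q t (s t) (s (t + 1)) := by
    apply Finset.prod_pos
    intro t ht
    rw [Finset.mem_Ico] at ht
    exact hq t ht.1 ht.2
  have hwinpos : 0 < win 1 T := by
    rw [hwin]
    exact mul_pos (hpm 1 le_rfl hT) hqpos
  have hpmprodpos : 0 < ∏ t ∈ Finset.Icc 1 T, pm t (s t) := by
    apply Finset.prod_pos
    intro t ht
    rw [Finset.mem_Icc] at ht
    exact hpm t ht.1 ht.2
  -- closed form for `U k`
  have hUk : U k = win 1 T ^ (k - 1) * ∏ t ∈ Finset.Icc 1 T, pm t (s t) := by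
    rw [hU]
    have hexp : ∀ i ∈ Finset.range (T + k - 1),
        win (max 1 (i + 2 - k)) (min T (i + 1)) =
        pm (max 1 (i + 2 - k)) (s (max 1 (i + 2 - k))) *
          ∏ t ∈ Finset.Ico (max 1 (i + 2 - k)) (min T (i + 1)), q t (s t) (s (t + 1)) :=
      fun i _ => hwin _ _
    rw [Finset.prod_congr rfl hexp, Finset.prod_mul_distrib]
    have hA : ∏ i ∈ Finset.range (T + k - 1),
        pm (max 1 (i + 2 - k)) (s (max 1 (i + 2 - k)))
        = pm 1 (s 1) ^ k * ∏ t ∈ Finset.Icc 2 T, pm t (s t) := by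
      rw [Finset.range_eq_Ico,
        ← Finset.prod_Ico_consecutive _ (Nat.zero_le k) (by omega : k ≤ T + k - 1)]
      congr 1
      · have h1 : ∀ i ∈ Finset.Ico 0 k,
            pm (max 1 (i + 2 - k)) (s (max 1 (i + 2 - k))) = pm 1 (s 1) := by
          intro i hi
          rw [Finset.mem_Ico] at hi
          have : max 1 (i + 2 - k) = 1 := by
            rcases Nat.le_total (i + 2 - k) 1 with h | h
            · exact max_eq_left h
            · have : i + 2 - k ≤ 1 := by omega
              exact max_eq_left this
          rw [this]
        rw [Finset.prod_congr rfl h1, Finset.prod_const, Nat.card_Ico]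
        congr 1
      · rw [Finset.prod_Ico_eq_prod_range]
        have h2 : Finset.Icc 2 T = Finset.Ico 2 (T + 1) := by
          ext x; simp [Finset.mem_Icc, Finset.mem_Ico]
        rw [h2, Finset.prod_Ico_eq_prod_range]
        apply Finset.prod_congr (by congr 1; omega)
        intro i hi
        have h3 : k + i + 2 - k = 2 + i := by omega
        rw [h3, max_eq_right (by omega)]
    have hB : ∏ i ∈ Finset.range (T + k - 1),
        ∏ t ∈ Finset.Ico (max 1 (i + 2 - k)) (min T (i + 1)), q t (s t) (s (t + 1))
        = (∏ t ∈ Finset.Ico 1 T, q t (s t) (s (t + 1))) ^ (k - 1) := by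
      rw [Finset.prod_comm' (t' := Finset.Ico 1 T)
        (s' := fun t => Finset.Icc t (t + k - 2)) ?_]
      · rw [← Finset.prod_pow]
        apply Finset.prod_congr rfl
        intro t ht
        rw [Finset.mem_Ico] at ht
        rw [Finset.prod_const, Nat.card_Icc]
        congr 1
        omega
      · intro i t
        simp only [Finset.mem_range, Finset.mem_Ico, Finset.mem_Icc, max_le_iff, lt_min_iff]
        omega
    rw [hA, hB, hwin, mul_pow]
    have h4 : Finset.Icc 1 T = insert 1 (Finset.Icc 2 T) := by
      ext x; simp [Finset.mem_Icc, Finset.mem_insert]; omega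
    rw [h4, Finset.prod_insert (by simp)]
    have h5 : pm 1 (s 1) ^ k = pm 1 (s 1) ^ (k - 1) * pm 1 (s 1) := by
      rw [← pow_succ]
      congr 1
      omega
    rw [h5]
    ring
  rw [hRbar, hRinf, hR1, hUk,
    Real.log_mul (pow_ne_zero _ (ne_of_gt hwinpos)) (ne_of_gt hpmprodpos),
    Real.log_pow,
    ← Real.log_prod (fun t ht => by
      rw [Finset.mem_Icc] at ht
      exact ne_of_gt (hpm t ht.1 ht.2))]
  push_cast [Nat.cast_sub hk1]
  ring
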